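/- Let H be a finite-dimensional vector space over ℤ/2ℤ of dimension 2g equipped with a nondegenerate alternating bilinear form B. For each quadratic form q on (H,B), define its Arf invariant Arf(q) ∈ {0,1} by the equality Σ_{x∈H} (−1)^{q(x)} = (−1)^{Arf(q)}·2^g. Then for every α ∈ H, (1/2^g)·Σ_q (−1)^{Arf(q)+q(α)} = 1, where the sum is over all quadratic forms q on (H,B). -/

import Mathlib

section Aux

lemma chi_add_aux (a b : ZMod 2) :
    (-1 : ℝ) ^ (a + b).val = (-1 : ℝ) ^ a.val * (-1 : ℝ) ^ b.val := by
  rcases (by decide : ∀ c : ZMod 2, c = 0 ∨ c = 1) a with rfl | rfl <;>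
  rcases (by decide : ∀ c : ZMod 2, c = 0 ∨ c = 1) b with rfl | rfl <;>
    norm_num [show ZMod.val (2 : ZMod 2) = 0 from by decide,
      show ZMod.val (1 : ZMod 2) = 1 from by decide,
      show ZMod.val (0 : ZMod 2) = 0 from by decide,
      show ((1 : ZMod 2) + 1) = 0 from by decide]

variable {H : Type*} [AddCommGroup H] [Module (ZMod 2) H]

lemma bform_symm_aux (B : H →ₗ[ZMod 2] H →ₗ[ZMod 2] ZMod 2)
    (halt : ∀ x : H, B x x = 0) (x y : H) : B x y = B y x := by
  have h := halt (x + y)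
  simp only [map_add, LinearMap.add_apply, halt] at h
  have hneg : ∀ a : ZMod 2, -a = a := by decide
  have := eq_neg_of_add_eq_zero_left (by linear_combination h : B x y + B y x = 0)
  rw [hneg] at this
  exact this

lemma exists_quad_aux [Fintype H] (B : H →ₗ[ZMod 2] H →ₗ[ZMod 2] ZMod 2)
    (halt : ∀ x : H, B x x = 0) :
    ∃ q : H → ZMod 2, ∀ x y : H, q (x + y) = q x + q y + B x y := by
  classical
  set n := Module.finrank (ZMod 2) H with hn
  let b : Module.Basis (Fin n) (ZMod 2) H := Module.finBasis _ _
  let U : H →ₗ[ZMod 2] H →ₗ[ZMod 2] ZMod 2 :=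
    LinearMap.mk₂ (ZMod 2)
      (fun x y => ∑ p ∈ Finset.univ.filter (fun p : Fin n × Fin n => p.1 < p.2),
        b.repr x p.1 * b.repr y p.2 * B (b p.1) (b p.2))
      (by intro x x' y
          rw [← Finset.sum_add_distrib]
          refine Finset.sum_congr rfl fun p _ => ?_
          simp only [map_add, Finsupp.add_apply]; ring)
      (by intro c x y
          rw [smul_eq_mul, Finset.mul_sum]
          refine Finset.sum_congr rfl fun p _ => ?_
          simp only [map_smul, Finsupp.smul_apply, smul_eq_mul]; ring)
      (by intro x y y'
          rw [← Finset.sum_add_distrib]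
          refine Finset.sum_congr rfl fun p _ => ?_
          simp only [map_add, Finsupp.add_apply]; ring)
      (by intro c x y
          rw [smul_eq_mul, Finset.mul_sum]
          refine Finset.sum_congr rfl fun p _ => ?_
          simp only [map_smul, Finsupp.smul_apply, smul_eq_mul]; ring)
  have hUb : ∀ k l : Fin n, U (b k) (b l) = if k < l then B (b k) (b l) else 0 := by
    intro k l
    show (∑ p ∈ Finset.univ.filter (fun p : Fin n × Fin n => p.1 < p.2),
        b.repr (b k) p.1 * b.repr (b l) p.2 * B (b p.1) (b p.2)) = _
    by_cases hkl : k < l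
    · rw [Finset.sum_eq_single_of_mem (k, l) (by simp [hkl])]
      · simp [b.repr_self, hkl]
      · intro p hp hne
        have : p.1 ≠ k ∨ p.2 ≠ l := by
          by_contra hc; push_neg at hc
          exact hne (Prod.ext hc.1 hc.2)
        rcases this with h | h <;>
          simp [b.repr_self, Finsupp.single_apply, Ne.symm h]
    · rw [if_neg hkl]
      apply Finset.sum_eq_zero
      intro p hp
      have hp' : p.1 < p.2 := (Finset.mem_filter.mp hp).2
      have : p.1 ≠ k ∨ p.2 ≠ l := by
        by_contra hc; push_neg at hc
        rw [hc.1, hc.2] at hp'; exact hkl hp'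
      rcases this with h | h <;>
        simp [b.repr_self, Finsupp.single_apply, Ne.symm h]
  have hkey : U + U.flip = B := by
    apply b.ext; intro k
    apply b.ext; intro l
    simp only [LinearMap.add_apply, LinearMap.flip_apply, hUb]
    rcases lt_trichotomy k l with h | h | h
    · rw [if_pos h, if_neg (asymm h), add_zero]
    · subst h; rw [if_neg (lt_irrefl k), add_zero, halt]
    · rw [if_neg (asymm h), if_pos h, zero_add]
      exact (bform_symm_aux B halt _ _)
  refine ⟨fun x => U x x, fun x y => ?_⟩
  have h2 : ∀ a : ZMod 2, a + a = 0 := by decide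
  have : B x y = U x y + U y x := by
    rw [← hkey]; simp [LinearMap.add_apply]
  simp only [map_add, LinearMap.add_apply, this]
  ring

end Aux

open scoped Classical in
/-- Let `H` be a `2g`-dimensional vector space over `ℤ/2ℤ` with a nondegenerate alternating
bilinear form `B`. For each quadratic form `q` on `(H, B)` (i.e. each `q` with
`q(x+y) = q(x) + q(y) + B(x,y)`), let `Arf q ∈ ℤ/2ℤ` be defined by the equality
`Σ_{x ∈ H} (-1)^{q(x)} = (-1)^{Arf q} · 2^g`. Then for every `α ∈ H`,
`(1/2^g) Σ_q (-1)^{Arf(q) + q(α)} = 1`, the sum being over all quadratic forms on `(H, B)`. -/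
theorem sum_over_quadratic_forms (g : ℕ) (H : Type*) [AddCommGroup H]
    [Module (ZMod 2) H] [Fintype H] (hdim : Module.finrank (ZMod 2) H = 2 * g)
    (B : H →ₗ[ZMod 2] H →ₗ[ZMod 2] ZMod 2)
    (halt : ∀ x : H, B x x = 0)
    (hnondeg : ∀ x : H, (∀ y : H, B x y = 0) → x = 0)
    (Arf : {q : H → ZMod 2 // ∀ x y : H, q (x + y) = q x + q y + B x y} → ZMod 2)
    (hArf : ∀ q : {q : H → ZMod 2 // ∀ x y : H, q (x + y) = q x + q y + B x y},
      (∑ x : H, (-1 : ℝ) ^ (q.1 x).val) = (-1 : ℝ) ^ (Arf q).val * 2 ^ g)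
    (α : H) :
    (1 / 2 ^ g : ℝ) *
      ∑ q : {q : H → ZMod 2 // ∀ x y : H, q (x + y) = q x + q y + B x y},
        (-1 : ℝ) ^ ((Arf q).val + (q.1 α).val) = 1 := by
  have h2 : ∀ a : ZMod 2, a + a = 0 := by decide
  have hone : ∀ a : ZMod 2, a ≠ 0 → a = 1 := by decide
  have hsymm := bform_symm_aux B halt
  have hHadd : ∀ v : H, v + v = 0 := by
    intro v
    have : v + v = (2 : ZMod 2) • v := by rw [two_smul]
    rw [this, show (2 : ZMod 2) = 0 from by decide, zero_smul]
  -- q 0 = 0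
  have hq0 : ∀ q : {q : H → ZMod 2 // ∀ x y : H, q (x + y) = q x + q y + B x y},
      q.1 0 = 0 := by
    intro q
    have := q.2 0 0
    simp only [add_zero, map_zero, LinearMap.zero_apply] at this
    exact (left_eq_add.mp this)
  -- the sum of (-1)^(q y) over all quadratic forms q vanishes for y ≠ 0
  have hsum0 : ∀ y : H, y ≠ 0 →
      (∑ q : {q : H → ZMod 2 // ∀ x y : H, q (x + y) = q x + q y + B x y},
        (-1 : ℝ) ^ (q.1 y).val) = 0 := by
    intro y hy
    obtain ⟨z, hz⟩ : ∃ z : H, B y z ≠ 0 := by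
      by_contra h; push_neg at h; exact hy (hnondeg y h)
    have hz1 : B y z = 1 := hone _ hz
    refine Finset.sum_involution
      (fun q _ => ⟨fun x => q.1 x + B x z, ?_⟩) ?_ ?_ (fun _ _ => Finset.mem_univ _) ?_
    · intro x x'
      show q.1 (x + x') + B (x + x') z = (q.1 x + B x z) + (q.1 x' + B x' z) + B x x'
      rw [q.2]
      simp only [map_add, LinearMap.add_apply]
      ring
    · intro q _
      show (-1 : ℝ) ^ (q.1 y).val + (-1 : ℝ) ^ (q.1 y + B y z).val = 0
      rw [hz1, chi_add_aux, show ZMod.val (1 : ZMod 2) = 1 from by decide]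
      ring
    · intro q _ _ hgq
      have := congrFun (congrArg Subtype.val hgq) y
      simp only at this
      rw [hz1] at this
      have : (1 : ZMod 2) = 0 := by
        have h' := left_eq_add.mp this.symm
        exact h'
      exact one_ne_zero this
    · intro q _
      apply Subtype.ext
      funext x
      show q.1 x + B x z + B x z = q.1 x
      rw [add_assoc, h2, add_zero]
  -- cardinality of the set of quadratic forms
  have hcard : Fintype.card {q : H → ZMod 2 // ∀ x y : H, q (x + y) = q x + q y + B x y}
      = 2 ^ (2 * g) := by
    obtain ⟨q0f, hq0f⟩ := exists_quad_aux B halt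
    have hquad : ∀ y : H, ∀ x x' : H,
        (q0f (x + x') + B (x + x') y) = (q0f x + B x y) + (q0f x' + B x' y) + B x x' := by
      intro y x x'
      rw [hq0f]
      simp only [map_add, LinearMap.add_apply]
      ring
    set ψ : H → {q : H → ZMod 2 // ∀ x y : H, q (x + y) = q x + q y + B x y} :=
      fun y => ⟨fun x => q0f x + B x y, hquad y⟩ with hψ
    have hbij : Function.Bijective ψ := by
      constructor
      · intro a b hab
        have : ∀ x : H, B x a = B x b := by
          intro x
          have := congrFun (congrArg Subtype.val hab) x
          simp only [hψ] at this
          exact add_left_cancel this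
        have hz : ∀ x : H, B (a - b) x = 0 := by
          intro x
          rw [← hsymm]
          simp [map_sub, this x]
        have := hnondeg _ hz
        exact sub_eq_zero.mp this
      · intro q
        have hq0f0 : q0f 0 = 0 := by
          have := hq0f 0 0
          simp only [add_zero, map_zero, LinearMap.zero_apply] at this
          exact (left_eq_add.mp this)
        have hf0 : q.1 0 + q0f 0 = 0 := by rw [hq0 q, hq0f0, add_zero]
        have hfadd : ∀ x x' : H, q.1 (x + x') + q0f (x + x')
            = (q.1 x + q0f x) + (q.1 x' + q0f x') := by
          intro x x'
          rw [q.2, hq0f]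
          have : ∀ a b c d e : ZMod 2, (a + b + e) + (c + d + e) = (a+c) + (b+d) + (e+e) := by
            intros; ring
          rw [this, h2, add_zero]
        let F : H →ₗ[ZMod 2] ZMod 2 :=
          { toFun := fun x => q.1 x + q0f x
            map_add' := hfadd
            map_smul' := by
              intro c x
              have hc01 : ∀ c : ZMod 2, c = 0 ∨ c = 1 := by decide
              rcases hc01 c with rfl | rfl
              · show q.1 ((0 : ZMod 2) • x) + q0f ((0 : ZMod 2) • x) = _
                rw [zero_smul]
                simp [hf0]
              · simp }
        have hinj : Function.Injective (B.flip : H →ₗ[ZMod 2] Module.Dual (ZMod 2) H) := by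
          intro a b hab
          have : ∀ x : H, B x a = B x b := fun x => congrFun (congrArg (fun (f : H →ₗ[ZMod 2] ZMod 2) => (f : H → ZMod 2)) hab) x
          have hz : ∀ x : H, B (a - b) x = 0 := by
            intro x
            rw [← hsymm]
            simp [map_sub, this x]
          exact sub_eq_zero.mp (hnondeg _ hz)
        have hsurj : Function.Surjective (B.flip : H →ₗ[ZMod 2] Module.Dual (ZMod 2) H) :=
          (LinearMap.injective_iff_surjective_of_finrank_eq_finrank
            (Subspace.dual_finrank_eq).symm).mp hinj
        obtain ⟨y, hy⟩ := hsurj F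
        refine ⟨y, Subtype.ext (funext fun x => ?_)⟩
        show q0f x + B x y = q.1 x
        have : B x y = q.1 x + q0f x := by
          have := congrFun (congrArg (fun (f : H →ₗ[ZMod 2] ZMod 2) => (f : H → ZMod 2)) hy) x
          simpa [LinearMap.flip_apply, F] using this
        rw [this, ← add_assoc, add_comm (q0f x) (q.1 x), add_assoc, h2, add_zero]
    have hcardH : Fintype.card H = 2 ^ (2 * g) := by
      have hb := Module.card_fintype (Module.finBasis (ZMod 2) H)
      rw [ZMod.card, Fintype.card_fin, hdim] at hb
      exact hb
    rw [← Fintype.card_congr (Equiv.ofBijective ψ hbij), hcardH]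
  -- main computation
  have key : ∀ q : {q : H → ZMod 2 // ∀ x y : H, q (x + y) = q x + q y + B x y},
      (-1 : ℝ) ^ ((Arf q).val + (q.1 α).val)
        = (1 / 2 ^ g : ℝ) * ∑ y : H, (-1 : ℝ) ^ (q.1 y).val * (-1 : ℝ) ^ (B y α).val := by
    intro q
    have hA : (-1 : ℝ) ^ (Arf q).val = (1 / 2 ^ g : ℝ) * ∑ x : H, (-1 : ℝ) ^ (q.1 x).val := by
      rw [hArf q]
      have : (2 : ℝ) ^ g ≠ 0 := by positivity
      field_simp
    have hterm : ∀ x : H, (-1 : ℝ) ^ (q.1 x).val * (-1 : ℝ) ^ (q.1 α).val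
        = (-1 : ℝ) ^ (q.1 (x + α)).val * (-1 : ℝ) ^ (B x α).val := by
      intro x
      rw [← chi_add_aux, ← chi_add_aux]
      congr 2
      rw [q.2 x α, add_assoc, h2, add_zero]
    have hre : (∑ x : H, (-1 : ℝ) ^ (q.1 (x + α)).val * (-1 : ℝ) ^ (B x α).val)
        = ∑ y : H, (-1 : ℝ) ^ (q.1 y).val * (-1 : ℝ) ^ (B y α).val := by
      apply Fintype.sum_bijective (fun x : H => x + α) (Equiv.addRight α).bijective
      intro x
      have hBx : B (x + α) α = B x α := by
        rw [map_add, LinearMap.add_apply, halt, add_zero]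
      show (-1 : ℝ) ^ (q.1 (x + α)).val * (-1 : ℝ) ^ (B x α).val
        = (-1 : ℝ) ^ (q.1 (x + α)).val * (-1 : ℝ) ^ (B (x + α) α).val
      rw [hBx]
    calc (-1 : ℝ) ^ ((Arf q).val + (q.1 α).val)
        = (-1 : ℝ) ^ (Arf q).val * (-1 : ℝ) ^ (q.1 α).val := pow_add _ _ _
      _ = ((1 / 2 ^ g : ℝ) * ∑ x : H, (-1 : ℝ) ^ (q.1 x).val) * (-1 : ℝ) ^ (q.1 α).val := by
            rw [hA]
      _ = (1 / 2 ^ g : ℝ) * ∑ x : H, (-1 : ℝ) ^ (q.1 x).val * (-1 : ℝ) ^ (q.1 α).val := by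
            rw [mul_assoc, Finset.sum_mul]
      _ = (1 / 2 ^ g : ℝ) * ∑ x : H, (-1 : ℝ) ^ (q.1 (x + α)).val * (-1 : ℝ) ^ (B x α).val := by
            rw [Finset.sum_congr rfl (fun x _ => hterm x)]
      _ = (1 / 2 ^ g : ℝ) * ∑ y : H, (-1 : ℝ) ^ (q.1 y).val * (-1 : ℝ) ^ (B y α).val := by
            rw [hre]
  rw [Finset.sum_congr rfl (fun q _ => key q), ← Finset.mul_sum, Finset.sum_comm]
  have hmain : (∑ y : H, ∑ q : {q : H → ZMod 2 // ∀ x y : H, q (x + y) = q x + q y + B x y},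
      (-1 : ℝ) ^ (q.1 y).val * (-1 : ℝ) ^ (B y α).val) = 2 ^ (2 * g) := by
    rw [Finset.sum_eq_single 0]
    · have h1 : ∀ q : {q : H → ZMod 2 // ∀ x y : H, q (x + y) = q x + q y + B x y},
          (-1 : ℝ) ^ (q.1 (0 : H)).val * (-1 : ℝ) ^ (B 0 α).val = 1 := by
        intro q
        rw [hq0 q, map_zero, LinearMap.zero_apply,
          show ZMod.val (0 : ZMod 2) = 0 from rfl]
        norm_num
      rw [Finset.sum_congr rfl (fun q _ => h1 q), Finset.sum_const, Finset.card_univ, hcard]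
      simp
    · intro y _ hy
      rw [← Finset.sum_mul, hsum0 y hy, zero_mul]
    · intro h
      exact absurd (Finset.mem_univ 0) h
  rw [hmain]
  have h2g : (2 : ℝ) ^ (2 * g) = 2 ^ g * 2 ^ g := by rw [two_mul, pow_add]
  have hne : (2 : ℝ) ^ g ≠ 0 := by positivity
  rw [h2g]
  field_simp
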